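/- Let φ = c₁ ∧ ⋯ ∧ c_m be a CNF formula. Construct a CIR U over schema {?A, ?B} with: for each clause c = d₁ ∨ ⋯ ∨ d_ℓ, a tuple (c, ⟨c,d₁⟩|⋯|⟨c,d_ℓ⟩); and for each pair of clause-literal pairs ⟨c,d⟩, ⟨c',d'⟩ with d and d' complementary literals of the same variable, a tuple (⟨c,d⟩|⟨c',d'⟩, ⟨c,d⟩|⟨c',d'⟩). Then U has a positive-probability sample satisfying the matching constraint {A → B, B → A} if and only if φ is satisfiable. -/
import Mathlib


/-- (Reduction from SAT to possible consistency for `?A ↔ ?B`.)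
Given a CNF formula with clause index type `ι`, where clause `c` has literal set `lits c`
(a literal is a pair `(variable, polarity)`), build the CIR `U` over `{?A, ?B}` with:
a tuple `(c, ⟨c,d₁⟩|⋯|⟨c,d_ℓ⟩)` for every clause `c`, and a tuple
`(⟨c,d⟩|⟨c',d'⟩, ⟨c,d⟩|⟨c',d'⟩)` for every conflicting pair of clause-literal pairs
(`d`, `d'` literals of the same variable with opposite polarity).  Then `U` has a
positive-probability sample satisfying the matching constraint `{A → B, B → A}` iff the
formula is satisfiable. -/
theorem stmt8 {ι Var : Type}
    (lits : ι → Finset (Var × Bool)) :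
    let Q := {q : (ι × (Var × Bool)) × (ι × (Var × Bool)) //
        q.1.2 ∈ lits q.1.1 ∧ q.2.2 ∈ lits q.2.1 ∧
        q.1.2.1 = q.2.2.1 ∧ q.1.2.2 = !q.2.2.2}
    (∃ rA rB : ι ⊕ Q → ι ⊕ (ι × (Var × Bool)),
        (∀ c : ι, rA (Sum.inl c) = Sum.inl c) ∧
        (∀ c : ι, ∃ d ∈ lits c, rB (Sum.inl c) = Sum.inr (c, d)) ∧
        (∀ q : Q, rA (Sum.inr q) = Sum.inr q.val.1 ∨ rA (Sum.inr q) = Sum.inr q.val.2) ∧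
        (∀ q : Q, rB (Sum.inr q) = Sum.inr q.val.1 ∨ rB (Sum.inr q) = Sum.inr q.val.2) ∧
        (∀ t t' : ι ⊕ Q, rA t = rA t' ↔ rB t = rB t'))
      ↔ ∃ τ : Var → Bool, ∀ c : ι, ∃ d ∈ lits c, τ d.1 = d.2 := by
  classical
  intro Q
  constructor
  · rintro ⟨rA, rB, hA, hB, hqA, hqB, hiff⟩
    refine ⟨fun x => decide (∃ c, rB (Sum.inl c) = Sum.inr (c, (x, true))), fun c => ?_⟩
    obtain ⟨d, hd, hrB⟩ := hB c
    refine ⟨d, hd, ?_⟩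
    rcases Bool.eq_false_or_eq_true d.2 with hpol | hpol
    · rw [hpol]
      have hdeq : d = (d.1, true) := Prod.ext rfl hpol
      simp only [decide_eq_true_eq]
      exact ⟨c, by rw [hrB, ← hdeq]⟩
    · rw [hpol]
      simp only [decide_eq_false_iff_not]
      rintro ⟨c', hc'⟩
      obtain ⟨d', hd', hrB'⟩ := hB c'
      have hd'eq : d' = (d.1, true) := by
        have := hrB'.symm.trans hc'
        simpa using this
      subst hd'eq
      set q : Q := ⟨((c, d), (c', (d.1, true))), ⟨hd, hd', rfl, by simp [hpol]⟩⟩ with hqdef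
      have hne1 : rA (Sum.inl c) ≠ rA (Sum.inr q) := by
        rw [hA c]; rcases hqA q with h | h <;> rw [h] <;> simp
      have hne2 : rA (Sum.inl c') ≠ rA (Sum.inr q) := by
        rw [hA c']; rcases hqA q with h | h <;> rw [h] <;> simp
      have hb1 : rB (Sum.inl c) ≠ rB (Sum.inr q) := fun h => hne1 ((hiff _ _).mpr h)
      have hb2 : rB (Sum.inl c') ≠ rB (Sum.inr q) := fun h => hne2 ((hiff _ _).mpr h)
      rcases hqB q with h | h
      · exact hb1 (hrB.trans h.symm)
      · exact hb2 (hc'.trans h.symm)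
  · rintro ⟨τ, hτ⟩
    choose dc hdmem hdτ using hτ
    set f : Q → ι × (Var × Bool) :=
      fun q => if τ q.val.1.2.1 = q.val.1.2.2 then q.val.2 else q.val.1 with hf
    have hfτ : ∀ q : Q, τ (f q).2.1 ≠ (f q).2.2 := by
      intro q
      obtain ⟨h1, h2, hv, hp⟩ := q.2
      simp only [hf]
      split
      · next h =>
          rw [← hv, h, hp]
          exact Bool.not_ne_self _
      · next h => exact h
    have hnc : ∀ (c : ι) (q : Q), (c, dc c) ≠ f q := by
      intro c q h
      exact hfτ q (h ▸ hdτ c)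
    refine ⟨Sum.elim Sum.inl (fun q => Sum.inr (f q)),
        Sum.elim (fun c => Sum.inr (c, dc c)) (fun q => Sum.inr (f q)),
        fun c => rfl, fun c => ⟨dc c, hdmem c, rfl⟩, ?_, ?_, ?_⟩
    · intro q
      simp only [Sum.elim_inr, hf]
      split
      · right; rfl
      · left; rfl
    · intro q
      simp only [Sum.elim_inr, hf]
      split
      · right; rfl
      · left; rfl
    · intro t t'
      cases t with
      | inl c =>
        cases t' with
        | inl c' =>
          simp only [Sum.elim_inl, Sum.inl.injEq, Sum.inr.injEq, Prod.mk.injEq]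
          constructor
          · rintro rfl; exact ⟨rfl, rfl⟩
          · rintro ⟨rfl, -⟩; rfl
        | inr q =>
          simp only [Sum.elim_inl, Sum.elim_inr, Sum.inr.injEq]
          constructor
          · intro h; exact absurd h (by simp)
          · intro h; exact absurd h (hnc c q)
      | inr q =>
        cases t' with
        | inl c' =>
          simp only [Sum.elim_inl, Sum.elim_inr, Sum.inr.injEq]
          constructor
          · intro h; exact absurd h (by simp)
          · intro h; exact absurd h.symm (hnc c' q)
        | inr q' => simp only [Sum.elim_inr]
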